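/- If M ⊆ R^p is generated by h_1,...,h_r, then M_D is generated by the elements (h_j)_D together with (0, (z_i∘π_1 − z_i∘π_2)(h_j∘π_2)) for 1 ≤ i ≤ n and 1 ≤ j ≤ r. -/
import Mathlib


/-- The double of `h ∈ R^p` along the two "pullback" homomorphisms `φ1, φ2 : R →+* S`. -/
def Lip.double {R S : Type*} [CommRing R] [CommRing S] {p : ℕ}
    (φ1 φ2 : R →+* S) (h : Fin p → R) : Fin p ⊕ Fin p → S :=
  Sum.elim (fun i => φ1 (h i)) (fun i => φ2 (h i))

/-- If `M ⊆ R^p` is generated by `h 1, ..., h r`, then the double `M_D` is generated by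
the `(h j)_D` together with the elements `(0, (z i ∘ π₁ − z i ∘ π₂)·(h j ∘ π₂))`,
i.e. `Sum.elim 0 (fun t => (φ1 (z i) − φ2 (z i)) * φ2 (h j t))`, assuming that
`φ1 α − φ2 α` always lies in the ideal generated by the `φ1 (z i) − φ2 (z i)`. -/
theorem doubleSpan_generators' {R S : Type*} [CommRing R] [CommRing S] {p r n : ℕ}
    (φ1 φ2 : R →+* S) (z : Fin n → R)
    (hz : ∀ α : R, φ1 α - φ2 α ∈ Ideal.span (Set.range fun i => φ1 (z i) - φ2 (z i)))
    (h : Fin r → (Fin p → R)) (M : Submodule R (Fin p → R))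
    (hM : M = Submodule.span R (Set.range h)) :
    Submodule.span S (Lip.double φ1 φ2 '' M)
      = Submodule.span S
          ((Set.range fun j => Lip.double φ1 φ2 (h j)) ∪
           (Set.range fun ij : Fin n × Fin r =>
             (Sum.elim (fun _ => (0 : S))
               (fun t => (φ1 (z ij.1) - φ2 (z ij.1)) * φ2 (h ij.2 t)) : Fin p ⊕ Fin p → S))) := by
  set D := Lip.double φ1 φ2 with hD
  set K := Submodule.span S
          ((Set.range fun j => D (h j)) ∪
           (Set.range fun ij : Fin n × Fin r =>
             (Sum.elim (fun _ => (0 : S))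
               (fun t => (φ1 (z ij.1) - φ2 (z ij.1)) * φ2 (h ij.2 t)) : Fin p ⊕ Fin p → S)))
    with hK
  -- the special generators are in K
  have hDh : ∀ j, D (h j) ∈ K := fun j =>
    Submodule.subset_span (Or.inl ⟨j, rfl⟩)
  have he : ∀ (i : Fin n) (j : Fin r),
      (Sum.elim (fun _ => (0 : S))
        (fun t => (φ1 (z i) - φ2 (z i)) * φ2 (h j t)) : Fin p ⊕ Fin p → S) ∈ K :=
    fun i j => Submodule.subset_span (Or.inr ⟨(i, j), rfl⟩)
  -- key: for any c : R and j, the "second-component" element is in K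
  have key : ∀ (c : R) (j : Fin r),
      (Sum.elim (fun _ => (0 : S))
        (fun t => (φ1 c - φ2 c) * φ2 (h j t)) : Fin p ⊕ Fin p → S) ∈ K := by
    intro c j
    obtain ⟨s, hs⟩ := (Submodule.mem_span_range_iff_exists_fun S).mp (hz c)
    have heq : (Sum.elim (fun _ => (0 : S))
        (fun t => (φ1 c - φ2 c) * φ2 (h j t)) : Fin p ⊕ Fin p → S)
        = ∑ i : Fin n, s i • (Sum.elim (fun _ => (0 : S))
            (fun t => (φ1 (z i) - φ2 (z i)) * φ2 (h j t)) : Fin p ⊕ Fin p → S) := by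
      funext x
      rw [Finset.sum_apply]
      cases x with
      | inl t => simp
      | inr t =>
        simp only [Sum.elim_inr, Pi.smul_apply, smul_eq_mul]
        rw [← hs, Finset.sum_mul]
        exact Finset.sum_congr rfl fun i _ => by simp only [smul_eq_mul]; ring
    rw [heq]
    exact Submodule.sum_mem _ fun i _ => Submodule.smul_mem _ _ (he i j)
  apply le_antisymm
  · rw [Submodule.span_le]
    rintro x ⟨m, hm, rfl⟩
    rw [hM] at hm
    obtain ⟨c, hc⟩ := (Submodule.mem_span_range_iff_exists_fun R).mp hm
    have heq : D m = ∑ j : Fin r, φ1 (c j) • D (h j)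
        - ∑ j : Fin r, (Sum.elim (fun _ => (0 : S))
            (fun t => (φ1 (c j) - φ2 (c j)) * φ2 (h j t)) : Fin p ⊕ Fin p → S) := by
      funext x
      have hm' : ∀ t : Fin p, m t = ∑ j : Fin r, c j * h j t := by
        intro t
        rw [← hc, Finset.sum_apply]
        rfl
      cases x with
      | inl t =>
        simp only [Pi.sub_apply, Finset.sum_apply, Pi.smul_apply, smul_eq_mul, hD,
          Lip.double, Sum.elim_inl, hm', map_sum, map_mul]
        simp
      | inr t =>
        simp only [Pi.sub_apply, Finset.sum_apply, Pi.smul_apply, smul_eq_mul, hD,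
          Lip.double, Sum.elim_inr, hm', map_sum, map_mul]
        rw [← Finset.sum_sub_distrib]
        exact Finset.sum_congr rfl fun j _ => by ring
    rw [heq]
    exact Submodule.sub_mem _
      (Submodule.sum_mem _ fun j _ => Submodule.smul_mem _ _ (hDh j))
      (Submodule.sum_mem _ fun j _ => key (c j) j)
  · rw [Submodule.span_le]
    rintro x (⟨j, rfl⟩ | ⟨⟨i, j⟩, rfl⟩)
    · exact Submodule.subset_span ⟨h j, by rw [hM]; exact Submodule.subset_span ⟨j, rfl⟩, rfl⟩
    · -- e_{ij} = φ1(z i) • D(h j) - D(z i • h j)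
      have hzh : z i • h j ∈ M := by
        rw [hM]; exact Submodule.smul_mem _ _ (Submodule.subset_span ⟨j, rfl⟩)
      have heq : (Sum.elim (fun _ => (0 : S))
          (fun t => (φ1 (z i) - φ2 (z i)) * φ2 (h j t)) : Fin p ⊕ Fin p → S)
          = φ1 (z i) • D (h j) - D (z i • h j) := by
        funext x
        cases x with
        | inl t =>
          simp [hD, Lip.double, Pi.smul_apply, smul_eq_mul, map_mul]
        | inr t =>
          simp only [Pi.sub_apply, Pi.smul_apply, smul_eq_mul, hD, Lip.double,
            Sum.elim_inr, Sum.elim_inl, Pi.smul_apply, smul_eq_mul, map_mul]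
          ring
      show (Sum.elim (fun _ => (0 : S))
          (fun t => (φ1 (z i) - φ2 (z i)) * φ2 (h j t)) : Fin p ⊕ Fin p → S)
          ∈ Submodule.span S (D '' ↑M)
      rw [heq]
      exact Submodule.sub_mem _
        (Submodule.smul_mem _ _ (Submodule.subset_span
          ⟨h j, by rw [hM]; exact Submodule.subset_span ⟨j, rfl⟩, rfl⟩))
        (Submodule.subset_span ⟨z i • h j, hzh, rfl⟩)
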